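/- arXiv:2511.09327 — 3 statements merged into one kernel-verified Lean document; each statement's English description precedes it below -/
import Mathlib

section
/- If F : V → ℝ is convex on a finite-dimensional real inner product space V and satisfies the linear growth bounds c₁|z| − c₂ ≤ F(z) ≤ c₃(1 + |z|) for all z ∈ V (with constants c₁, c₃ > 0, c₂ ∈ ℝ), then F is globally Lipschitz on V. -/
open scoped NNReal

theorem slope_bound
    {V : Type*} [NormedAddCommGroup V] [InnerProductSpace ℝ V]
    (F : V → ℝ) (hconv : ConvexOn ℝ Set.univ F)
    (c₃ : ℝ) (hc₃ : 0 < c₃)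
    (hup : ∀ z : V, F z ≤ c₃ * (1 + ‖z‖)) :
    ∀ x y : V, F y - F x ≤ c₃ * ‖y - x‖ := by
  intro x y
  rcases eq_or_ne y x with rfl | hne
  · simp
  set d : ℝ := ‖y - x‖ with hd
  have hd0 : 0 < d := by simpa [hd] using sub_ne_zero.mpr hne
  have key : ∀ ε : ℝ, 0 < ε → F y - F x ≤ c₃ * d + ε := by
    intro ε hε
    set A : ℝ := c₃ * (1 + ‖x‖) - F x with hA
    have hA0 : 0 ≤ A := sub_nonneg.mpr (hup x)
    set t : ℝ := max d (d * A / ε) with ht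
    have htd : d ≤ t := le_max_left _ _
    have ht0 : 0 < t := lt_of_lt_of_le hd0 htd
    set u : V := (d⁻¹) • (y - x) with hu
    have hunorm : ‖u‖ = 1 := by
      rw [hu, norm_smul, norm_inv, Real.norm_eq_abs, abs_of_pos hd0]
      field_simp
      exact hd.symm
    set w : V := x + t • u with hw
    have hwy : y = (1 - d / t) • x + (d / t) • w := by
      rw [hw, hu]
      match_scalars <;> field_simp <;> ring
    have hl0 : 0 ≤ d / t := div_nonneg hd0.le ht0.le
    have hl1 : d / t ≤ 1 := div_le_one_of_le₀ htd ht0.le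
    have hcv := hconv.2 (Set.mem_univ x) (Set.mem_univ w)
      (by linarith : (0:ℝ) ≤ 1 - d / t) hl0 (by ring)
    rw [← hwy] at hcv
    have hFw : F w ≤ c₃ * (1 + ‖x‖ + t) := by
      have : ‖w‖ ≤ ‖x‖ + t := by
        rw [hw]
        refine (norm_add_le _ _).trans ?_
        rw [norm_smul, Real.norm_eq_abs, abs_of_pos ht0, hunorm, mul_one]
      calc F w ≤ c₃ * (1 + ‖w‖) := hup w
        _ ≤ c₃ * (1 + (‖x‖ + t)) := by nlinarith
        _ = c₃ * (1 + ‖x‖ + t) := by ring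
    -- F y ≤ (1 - d/t) F x + (d/t) F w
    have h1 : F y - F x ≤ (d / t) * (F w - F x) := by
      have := hcv
      simp only [smul_eq_mul] at this
      nlinarith
    have h2 : (d / t) * (F w - F x) ≤ (d / t) * (A + c₃ * t) := by
      apply mul_le_mul_of_nonneg_left _ hl0
      rw [hA]; nlinarith
    have h3 : (d / t) * (A + c₃ * t) = d * A / t + c₃ * d := by
      field_simp
    have h4 : d * A / t ≤ ε := by
      rw [div_le_iff₀ ht0]
      have : d * A / ε ≤ t := le_max_right _ _
      rw [div_le_iff₀ hε] at this
      linarith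
    linarith
  by_contra hcon
  push_neg at hcon
  have := key ((F y - F x - c₃ * d) / 2) (by linarith)
  linarith

/-- A convex function of linear growth on a finite-dimensional real inner product
space is globally Lipschitz. -/
theorem convex_linearGrowth_lipschitz
    {V : Type*} [NormedAddCommGroup V] [InnerProductSpace ℝ V] [FiniteDimensional ℝ V]
    (F : V → ℝ) (hconv : ConvexOn ℝ Set.univ F)
    (c₁ c₂ c₃ : ℝ) (hc₁ : 0 < c₁) (hc₃ : 0 < c₃)
    (hlow : ∀ z : V, c₁ * ‖z‖ - c₂ ≤ F z)
    (hup : ∀ z : V, F z ≤ c₃ * (1 + ‖z‖)) :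
    ∃ L : ℝ≥0, LipschitzWith L F := by
  refine ⟨⟨c₃, hc₃.le⟩, LipschitzWith.of_dist_le_mul fun x y => ?_⟩
  have h1 := slope_bound F hconv c₃ hc₃ hup y x
  have h2 := slope_bound F hconv c₃ hc₃ hup x y
  rw [Real.dist_eq, abs_le]
  rw [dist_eq_norm] at *
  have hxy : ‖y - x‖ = ‖x - y‖ := by rw [← neg_sub, norm_neg]
  constructor
  · change -(c₃ * ‖x - y‖) ≤ F x - F y
    rw [← hxy] at *
    linarith
  · change F x - F y ≤ c₃ * ‖x - y‖
    linarith
end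

section
/- For F as below and F_ε(z) := √(ε + F(z)²), the radial derivative bound holds uniformly in ε: there exist constants c₄, c₆ > 0 and c₅ ∈ ℝ such that c₄|z| − c₅ ≤ ⟨F_ε'(z), z⟩ ≤ c₆(1 + |z|) for all z ∈ V and all 0 < ε < 1. -/
/-- Gradient inequality for a convex function at a point of differentiability. -/
lemma aux_grad_ineq {V : Type*} [NormedAddCommGroup V] [InnerProductSpace ℝ V]
    {F : V → ℝ} (hconv : ConvexOn ℝ Set.univ F) {z v : V} {f' : V →L[ℝ] ℝ}
    (hd : HasFDerivAt F f' z) : f' v ≤ F (z + v) - F z := by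
  have hline : HasDerivAt (fun t : ℝ => z + t • v) v 0 := by
    simpa using ((hasDerivAt_id (0 : ℝ)).smul_const v).const_add z
  have hφ : HasDerivAt (fun t : ℝ => F (z + t • v)) (f' v) 0 :=
    (show HasFDerivAt F f' (z + (0 : ℝ) • v) by simpa using hd).comp_hasDerivAt 0 hline
  have hconvline : ConvexOn ℝ Set.univ (fun t : ℝ => F (z + t • v)) := by
    have h := hconv.comp_affineMap (AffineMap.lineMap z (z + v) : ℝ →ᵃ[ℝ] V)
    have heq : (F ∘ ⇑(AffineMap.lineMap z (z + v))) = fun t : ℝ => F (z + t • v) := by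
      funext t
      simp only [Function.comp_apply, AffineMap.lineMap_apply]
      congr 1
      simp [vsub_eq_sub, vadd_eq_add]
      abel
    rw [heq] at h
    simpa using h
  have hs := hconvline.le_slope_of_hasDerivAt (Set.mem_univ (0 : ℝ))
    (Set.mem_univ (1 : ℝ)) one_pos hφ
  rw [slope_def_field] at hs
  simpa using hs

set_option maxHeartbeats 1600000 in
/-- Uniform radial derivative bounds for the regularizations `F_ε(z) = √(ε + F(z)²)`:
there are `c₄, c₆ > 0` and `c₅ ∈ ℝ` with
`c₄|z| − c₅ ≤ ⟨F_ε'(z), z⟩ ≤ c₆(1 + |z|)` for all `z` and all `0 < ε < 1`. -/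
theorem radial_derivative_bounds
    {V : Type*} [NormedAddCommGroup V] [InnerProductSpace ℝ V] [FiniteDimensional ℝ V]
    (F : V → ℝ) (hconv : ConvexOn ℝ Set.univ F)
    (c₁ c₂ c₃ : ℝ) (hc₁ : 0 < c₁) (hc₃ : 0 < c₃)
    (hlow : ∀ z : V, c₁ * ‖z‖ - c₂ ≤ F z)
    (hup : ∀ z : V, F z ≤ c₃ * (1 + ‖z‖))
    (hF0 : F 0 = 0)
    (hC1 : ContDiffOn ℝ 1 F ({(0 : V)}ᶜ)) :
    ∃ c₄ c₆ : ℝ, 0 < c₄ ∧ 0 < c₆ ∧ ∃ c₅ : ℝ,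
      ∀ (ε : ℝ), 0 < ε → ε < 1 → ∀ z : V,
        c₄ * ‖z‖ - c₅ ≤ fderiv ℝ (fun w : V => Real.sqrt (ε + (F w) ^ 2)) z z ∧
        fderiv ℝ (fun w : V => Real.sqrt (ε + (F w) ^ 2)) z z ≤ c₆ * (1 + ‖z‖) := by
  set B : ℝ := max (c₂ / c₁) 0 with hB
  have hB0 : 0 ≤ B := le_max_right _ _
  set A : ℝ := c₃ * (1 + 2 * B) + |c₂| with hA
  have hA0 : 0 ≤ A := by positivity
  refine ⟨c₁, 4 * c₃ + 3 * |c₂| + 1, hc₁, by positivity, |c₂| + 1 + c₁ * B + 3 * A, ?_⟩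
  intro ε hε hε1 z
  -- global bound on |F w|
  have habsF : ∀ w : V, |F w| ≤ c₃ * (1 + ‖w‖) + |c₂| := by
    intro w
    rw [abs_le]
    constructor
    · have h1 := hlow w
      have h2 : 0 ≤ c₁ * ‖w‖ := by positivity
      
      nlinarith [abs_nonneg c₂, le_abs_self c₂, norm_nonneg w,
        mul_nonneg hc₃.le (add_nonneg zero_le_one (norm_nonneg w))]
    · have := hup w
      nlinarith [abs_nonneg c₂]
  by_cases hz : z = 0
  · subst hz
    simp only [map_zero]
    constructor
    · simp only [norm_zero, mul_zero, zero_sub]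
      have : (0:ℝ) ≤ |c₂| + 1 + c₁ * B + 3 * A := by positivity
      linarith
    · simp only [norm_zero]
      nlinarith [abs_nonneg c₂]
  -- z ≠ 0 : compute the derivative
  · have hzmem : z ∈ ({(0 : V)}ᶜ : Set V) := by simpa using hz
    have hopen : IsOpen ({(0 : V)}ᶜ : Set V) := isOpen_compl_singleton
    have hdF : DifferentiableAt ℝ F z :=
      ((hC1.contDiffAt (hopen.mem_nhds hzmem)).differentiableAt one_ne_zero)
    set f' : V →L[ℝ] ℝ := fderiv ℝ F z with hf'
    have hF' : HasFDerivAt F f' z := hdF.hasFDerivAt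
    have hpos : 0 < ε + F z ^ 2 := by positivity
    set s : ℝ := Real.sqrt (ε + F z ^ 2) with hsdef
    have hs0 : 0 < s := Real.sqrt_pos.mpr hpos
    have hs2 : s ^ 2 = ε + F z ^ 2 := Real.sq_sqrt hpos.le
    have hsF : |F z| ≤ s := by
      rw [← Real.sqrt_sq_eq_abs]
      exact Real.sqrt_le_sqrt (by linarith)
    have hsε : Real.sqrt ε ≤ s := Real.sqrt_le_sqrt (by nlinarith [sq_nonneg (F z)])
    have hε1' : Real.sqrt ε ≤ 1 := by
      rw [show (1:ℝ) = Real.sqrt 1 by simp]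
      exact Real.sqrt_le_sqrt hε1.le
    have hεs : ε ≤ s := le_trans (by nlinarith [Real.sq_sqrt hε.le, Real.sqrt_nonneg ε]) hsε
    -- derivative of the inner function
    have hinner : HasFDerivAt (fun w : V => ε + F w ^ 2) (F z • f' + F z • f') z := by
      have h1 : HasFDerivAt (fun w : V => ε + F w * F w) (F z • f' + F z • f') z :=
        (hF'.mul hF').const_add ε
      have : (fun w : V => ε + F w ^ 2) = fun w : V => ε + F w * F w := by
        funext w; ring
      rw [this]
      exact h1
    have hsqrt : HasDerivAt Real.sqrt (1 / (2 * s)) (ε + F z ^ 2) :=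
      Real.hasDerivAt_sqrt hpos.ne'
    have hg : HasFDerivAt (fun w : V => Real.sqrt (ε + F w ^ 2))
        ((1 / (2 * s)) • (F z • f' + F z • f')) z := by
      have h := hsqrt.comp_hasFDerivAt z hinner
      exact h
    have hval : fderiv ℝ (fun w : V => Real.sqrt (ε + F w ^ 2)) z z
        = (F z / s) * f' z := by
      rw [hg.fderiv]
      simp only [ContinuousLinearMap.coe_smul', Pi.smul_apply,
        ContinuousLinearMap.add_apply, smul_eq_mul]
      field_simp
      ring
    set D : ℝ := f' z with hD
    have hD1 : F z ≤ D := by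
      have h := aux_grad_ineq hconv (v := -z) hF'
      simp only [add_neg_cancel, hF0, map_neg] at h
      linarith
    have hD2 : D ≤ F (z + z) - F z := aux_grad_ineq hconv (v := z) hF'
    have hnormzz : ‖z + z‖ ≤ 2 * ‖z‖ := by
      calc ‖z + z‖ ≤ ‖z‖ + ‖z‖ := norm_add_le z z
      _ = 2 * ‖z‖ := by ring
    rw [hval]
    constructor
    · -- lower bound
      by_cases hFz : 0 ≤ F z
      · -- F z ≥ 0 : (F z / s) * D ≥ F z ^ 2 / s ≥ F z - 1
        have hr0 : 0 ≤ F z / s := div_nonneg hFz hs0.le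
        have step1 : (F z / s) * F z ≤ (F z / s) * D :=
          mul_le_mul_of_nonneg_left hD1 hr0
        have hFles : F z ≤ s := le_trans (le_abs_self _) hsF
        have key : F z * s - F z ^ 2 ≤ s := by
          nlinarith [sq_nonneg (s - F z)]
        have step2 : F z - 1 ≤ (F z / s) * F z := by
          rw [div_mul_eq_mul_div, le_div_iff₀ hs0]
          nlinarith
        have := hlow z
        linarith [le_abs_self c₂, mul_nonneg hc₁.le hB0, hA0]
      · -- F z < 0 : then ‖z‖ ≤ B and everything is bounded
        push_neg at hFz
        have hzB : ‖z‖ ≤ B := by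
          have h1 := hlow z
          have h2 : ‖z‖ ≤ c₂ / c₁ := by
            rw [le_div_iff₀ hc₁]
            nlinarith
          exact le_trans h2 (le_max_left _ _)
        have hFzA : -A ≤ F z := by
          have h1 := hlow z
          have : -c₂ ≤ F z := by nlinarith [norm_nonneg z]
          have h2 : c₂ ≤ |c₂| := le_abs_self _
          have h3 : |c₂| ≤ A := by nlinarith
          linarith [neg_abs_le c₂]
        have hF2A : F (z + z) ≤ A := by
          have h1 := hup (z + z)
          have : F (z + z) ≤ c₃ * (1 + 2 * ‖z‖) := by nlinarith
          nlinarith [abs_nonneg c₂]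
        have hDub : D ≤ 2 * A := by
          have : -F z ≤ A := by
            have h2 : c₂ ≤ |c₂| := le_abs_self _
            have h3 : |c₂| ≤ A := by nlinarith
            have := hlow z
            nlinarith [norm_nonneg z]
          linarith
        have hr1 : -1 ≤ F z / s := by
          rw [le_div_iff₀ hs0]
          have := neg_abs_le (F z)
          linarith
        have hr2 : F z / s ≤ 0 := div_nonpos_of_nonpos_of_nonneg hFz.le hs0.le
        have hlb : -(2 * A) ≤ (F z / s) * D := by
          rcases le_or_gt 0 D with hd | hd
          · have h := mul_le_mul_of_nonneg_right hr1 hd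
            linarith [hDub]
          · have h : 0 ≤ (F z / s) * D := mul_nonneg_of_nonpos_of_nonpos hr2 hd.le
            linarith [hA0]
        have : c₁ * ‖z‖ ≤ c₁ * B := mul_le_mul_of_nonneg_left hzB hc₁.le
        linarith [abs_nonneg c₂, hA0]
    · -- upper bound
      have hDabs : |D| ≤ 2 * |F z| + |F (z + z)| := by
        rw [abs_le]
        constructor
        · have := neg_abs_le (F z)
          have := abs_nonneg (F (z + z))
          have := abs_nonneg (F z)
          linarith
        · have := le_abs_self (F (z + z))
          have := neg_abs_le (F z)
          have := le_abs_self (F z)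
          linarith
      have hVle : (F z / s) * D ≤ |D| := by
        calc (F z / s) * D ≤ |(F z / s) * D| := le_abs_self _
        _ = |F z| / s * |D| := by rw [abs_mul, abs_div, abs_of_pos hs0]
        _ ≤ 1 * |D| := by
            apply mul_le_mul_of_nonneg_right _ (abs_nonneg D)
            rw [div_le_one hs0]; exact hsF
        _ = |D| := one_mul _
      have h1 := habsF z
      have h2 := habsF (z + z)
      have h3 : c₃ * (1 + ‖z + z‖) + |c₂| ≤ c₃ * (1 + 2 * ‖z‖) + |c₂| := by nlinarith
      nlinarith [norm_nonneg z, abs_nonneg c₂,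
        mul_nonneg (abs_nonneg c₂) (norm_nonneg z), mul_nonneg hc₃.le (norm_nonneg z)]
end

section
/- The linear perspective integrand of a convex linear-growth function is continuous, positively 1-homogeneous, and of linear growth: given convex F : W → ℝ with c₁|z| − c₂ ≤ F(z) ≤ c₃(1 + |z|), define F^#(t, z) := t·F(z/t) for t > 0 and F^#(0, z) := F^∞(z). Then F^# : [0,∞) × W → ℝ is continuous, satisfies F^#(λt, λz) = λ·F^#(t, z) for all λ ≥ 0, and is convex on [0,∞) × W. -/
open Filter Topology

set_option maxHeartbeats 2000000 in
/-- The linear perspective integrand `F^#(t,z) = t·F(z/t)` (for `t > 0`), extended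
by the recession function `F^#(0,z) = F^∞(z)`, is continuous on `[0,∞) × W`,
positively 1-homogeneous, convex on `[0,∞) × W`, and of linear growth. -/
theorem perspective_integrand_properties
    {W : Type*} [NormedAddCommGroup W] [InnerProductSpace ℝ W] [FiniteDimensional ℝ W]
    (F : W → ℝ) (hconv : ConvexOn ℝ Set.univ F)
    (c₁ c₂ c₃ : ℝ) (hc₁ : 0 < c₁) (hc₃ : 0 < c₃)
    (hlow : ∀ z : W, c₁ * ‖z‖ - c₂ ≤ F z)
    (hup : ∀ z : W, F z ≤ c₃ * (1 + ‖z‖))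
    (Finf : W → ℝ)
    (hFinf : ∀ z : W, Tendsto (fun t : ℝ => t * F (t⁻¹ • z))
      (nhdsWithin (0 : ℝ) (Set.Ioi 0)) (nhds (Finf z)))
    (Fp : ℝ × W → ℝ)
    (hFp : ∀ p : ℝ × W, Fp p = if 0 < p.1 then p.1 * F (p.1⁻¹ • p.2) else Finf p.2) :
    ContinuousOn Fp (Set.Ici (0 : ℝ) ×ˢ (Set.univ : Set W)) ∧
    (∀ lam : ℝ, 0 ≤ lam → ∀ t : ℝ, 0 ≤ t → ∀ z : W,
      Fp (lam * t, lam • z) = lam * Fp (t, z)) ∧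
    ConvexOn ℝ (Set.Ici (0 : ℝ) ×ˢ (Set.univ : Set W)) Fp ∧
    (∃ C : ℝ, 0 < C ∧ ∀ t : ℝ, 0 ≤ t → ∀ z : W, |Fp (t, z)| ≤ C * (t + ‖z‖)) := by
  have hlow' : ∀ z : W, -c₂ ≤ F z := by
    intro z
    nlinarith [hlow z, norm_nonneg z, mul_nonneg hc₁.le (norm_nonneg z)]
  -- F is c₃-Lipschitz
  have hLip : ∀ z w : W, F w - F z ≤ c₃ * ‖w - z‖ := by
    intro z w
    rcases eq_or_ne w z with h | h
    · simp [h]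
    set d := ‖w - z‖ with hd
    have hd0 : 0 < d := norm_pos_iff.mpr (sub_ne_zero.mpr h)
    have key : ∀ r : ℝ, 0 < r →
        F w - F z ≤ (d / (d + r)) * (c₃ * (1 + ‖w‖ + r) + c₂) := by
      intro r hr
      have hdr : 0 < d + r := by linarith
      set θ := d / (d + r) with hθ
      have hθ0 : 0 ≤ θ := div_nonneg hd0.le hdr.le
      have hθ1 : θ ≤ 1 := by rw [hθ, div_le_one hdr]; linarith
      set u := w + (r / d) • (w - z) with hu
      have hcomb : θ • u + (1 - θ) • z = w := by
        have hθr : θ * (r / d) = 1 - θ := by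
          rw [hθ]; field_simp; try ring
        rw [hu, smul_add, smul_smul, hθr]
        module
      have h1 : F w ≤ θ * F u + (1 - θ) * F z := by
        have := hconv.2 (Set.mem_univ u) (Set.mem_univ z) hθ0
          (by linarith : (0:ℝ) ≤ 1 - θ) (by ring)
        rwa [hcomb] at this
      have hnu : ‖u‖ ≤ ‖w‖ + r := by
        calc ‖u‖ ≤ ‖w‖ + ‖(r / d) • (w - z)‖ := norm_add_le _ _
          _ = ‖w‖ + (r / d) * d := by
              rw [norm_smul, Real.norm_eq_abs, abs_of_pos (div_pos hr hd0)]
          _ = ‖w‖ + r := by field_simp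
      have h2 : F u ≤ c₃ * (1 + ‖w‖ + r) := by nlinarith [hup u, hc₃.le]
      have h3 : -c₂ ≤ F z := hlow' z
      nlinarith [mul_le_mul_of_nonneg_left h2 hθ0, mul_le_mul_of_nonneg_left h3 hθ0]
    have hlimφ : Tendsto (fun r : ℝ => (d / (d + r)) * (c₃ * (1 + ‖w‖ + r) + c₂))
        atTop (𝓝 (c₃ * d)) := by
      have h₀ : Tendsto (fun r : ℝ => d + r) atTop atTop :=
        tendsto_atTop_add_const_left _ _ tendsto_id
      have h₁ : Tendsto (fun r : ℝ => (d + r)⁻¹) atTop (𝓝 0) := h₀.inv_tendsto_atTop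
      have h₂ : Tendsto (fun r : ℝ =>
          d * (c₃ * (1 + ‖w‖) + c₂) * (d + r)⁻¹ + (c₃ * d - c₃ * d * d * (d + r)⁻¹))
          atTop (𝓝 (c₃ * d)) := by
        have hA := h₁.const_mul (d * (c₃ * (1 + ‖w‖) + c₂))
        have hB := h₁.const_mul (c₃ * d * d)
        have hC : Tendsto (fun _ : ℝ => c₃ * d) atTop (𝓝 (c₃ * d)) := tendsto_const_nhds
        have := hA.add (hC.sub hB)
        simpa using this
      refine h₂.congr' ?_
      filter_upwards [eventually_gt_atTop (0:ℝ)] with r hr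
      have hdr : d + r ≠ 0 := by positivity
      field_simp
      ring
    have : F w - F z ≤ c₃ * d :=
      ge_of_tendsto hlimφ (by
        filter_upwards [eventually_gt_atTop (0:ℝ)] with r hr using key r hr)
    simpa [hd] using this
  have hLipabs : ∀ z w : W, |F w - F z| ≤ c₃ * ‖w - z‖ := by
    intro z w
    rw [abs_sub_le_iff]
    exact ⟨hLip z w, by simpa [norm_sub_rev] using hLip w z⟩
  have hFcont : Continuous F := by
    have : LipschitzWith (Real.toNNReal c₃) F := by
      apply LipschitzWith.of_dist_le_mul
      intro x y
      rw [Real.dist_eq, dist_eq_norm, Real.coe_toNNReal _ hc₃.le]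
      exact hLipabs y x
    exact this.continuous
  -- monotonicity of t ↦ t (F(z/t) - F 0)
  have hanti : ∀ (z : W) (s t : ℝ), 0 < s → s ≤ t →
      t * (F (t⁻¹ • z) - F 0) ≤ s * (F (s⁻¹ • z) - F 0) := by
    intro z s t hs hst
    have ht : 0 < t := lt_of_lt_of_le hs hst
    have hw : (s / t) • (s⁻¹ • z) = t⁻¹ • z := by
      rw [smul_smul]; congr 1; field_simp; try ring
    have hb : (0:ℝ) ≤ 1 - s / t := by
      rw [sub_nonneg, div_le_one ht]; exact hst
    have hab : s / t + (1 - s / t) = 1 := by ring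
    have hkey := hconv.2 (Set.mem_univ (s⁻¹ • z)) (Set.mem_univ (0 : W))
      (by positivity : (0:ℝ) ≤ s / t) hb hab
    rw [smul_zero, add_zero, hw, smul_eq_mul, smul_eq_mul] at hkey
    have hmul := mul_le_mul_of_nonneg_left hkey ht.le
    have hexp : t * (s / t * F (s⁻¹ • z) + (1 - s / t) * F 0)
        = s * F (s⁻¹ • z) + (t - s) * F 0 := by field_simp; try ring
    rw [hexp] at hmul
    linarith
  have hlimh : ∀ z : W, Tendsto (fun t : ℝ => t * (F (t⁻¹ • z) - F 0))
      (𝓝[>] (0:ℝ)) (𝓝 (Finf z)) := by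
    intro z
    have h2 : Tendsto (fun t : ℝ => t * F 0) (𝓝[>] (0:ℝ)) (𝓝 0) := by
      have : Tendsto (fun t : ℝ => t * F 0) (𝓝 (0:ℝ)) (𝓝 (0 * F 0)) :=
        (continuous_id.mul continuous_const).tendsto 0
      simpa using this.mono_left nhdsWithin_le_nhds
    simpa [mul_sub] using (hFinf z).sub h2
  -- upper bound via monotone limit
  have hub : ∀ (z : W) (t : ℝ), 0 < t → t * (F (t⁻¹ • z) - F 0) ≤ Finf z := by
    intro z t ht
    refine ge_of_tendsto (hlimh z) ?_
    filter_upwards [Ioo_mem_nhdsGT_of_mem ⟨le_refl (0:ℝ), ht⟩] with s hs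
    exact hanti z s t hs.1 hs.2.le
  -- bounds on Finf
  have hFinf_ub : ∀ z : W, Finf z ≤ c₃ * ‖z‖ := by
    intro z
    have hg : Tendsto (fun t : ℝ => c₃ * t + c₃ * ‖z‖) (𝓝[>] (0:ℝ)) (𝓝 (c₃ * ‖z‖)) := by
      have : Tendsto (fun t : ℝ => c₃ * t + c₃ * ‖z‖) (𝓝 (0:ℝ)) (𝓝 (c₃ * 0 + c₃ * ‖z‖)) := by
        exact ((continuous_const.mul continuous_id).add continuous_const).tendsto 0
      simpa using this.mono_left nhdsWithin_le_nhds
    refine le_of_tendsto_of_tendsto (hFinf z) hg ?_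
    filter_upwards [eventually_mem_nhdsWithin] with t ht
    have ht0 : (0:ℝ) < t := ht
    have : t * F (t⁻¹ • z) ≤ t * (c₃ * (1 + ‖t⁻¹ • z‖)) :=
      mul_le_mul_of_nonneg_left (hup _) ht0.le
    have hnorm : ‖t⁻¹ • z‖ = t⁻¹ * ‖z‖ := by
      rw [norm_smul, Real.norm_eq_abs, abs_of_pos (inv_pos.mpr ht0)]
    rw [hnorm] at this
    calc t * F (t⁻¹ • z) ≤ t * (c₃ * (1 + t⁻¹ * ‖z‖)) := this
      _ = c₃ * t + c₃ * ‖z‖ := by field_simp; try ring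
  have hFinf_lb : ∀ z : W, c₁ * ‖z‖ ≤ Finf z := by
    intro z
    have hg : Tendsto (fun t : ℝ => c₁ * ‖z‖ - c₂ * t) (𝓝[>] (0:ℝ)) (𝓝 (c₁ * ‖z‖)) := by
      have : Tendsto (fun t : ℝ => c₁ * ‖z‖ - c₂ * t) (𝓝 (0:ℝ)) (𝓝 (c₁ * ‖z‖ - c₂ * 0)) :=
        (continuous_const.sub (continuous_const.mul continuous_id)).tendsto 0
      simpa using this.mono_left nhdsWithin_le_nhds
    refine le_of_tendsto_of_tendsto hg (hFinf z) ?_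
    filter_upwards [eventually_mem_nhdsWithin] with t ht
    have ht0 : (0:ℝ) < t := ht
    have : t * (c₁ * ‖t⁻¹ • z‖ - c₂) ≤ t * F (t⁻¹ • z) :=
      mul_le_mul_of_nonneg_left (hlow _) ht0.le
    have hnorm : ‖t⁻¹ • z‖ = t⁻¹ * ‖z‖ := by
      rw [norm_smul, Real.norm_eq_abs, abs_of_pos (inv_pos.mpr ht0)]
    rw [hnorm] at this
    calc c₁ * ‖z‖ - c₂ * t = t * (c₁ * (t⁻¹ * ‖z‖) - c₂) := by field_simp; try ring
      _ ≤ t * F (t⁻¹ • z) := this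
  have hFinf_lip : ∀ z w : W, Finf w - Finf z ≤ c₃ * ‖w - z‖ := by
    intro z w
    have hdiff : Tendsto (fun t : ℝ => t * F (t⁻¹ • w) - t * F (t⁻¹ • z))
        (𝓝[>] (0:ℝ)) (𝓝 (Finf w - Finf z)) := (hFinf w).sub (hFinf z)
    refine le_of_tendsto hdiff ?_
    filter_upwards [eventually_mem_nhdsWithin] with t ht
    have ht0 : (0:ℝ) < t := ht
    have h := hLipabs (t⁻¹ • z) (t⁻¹ • w)
    have hnorm : ‖t⁻¹ • w - t⁻¹ • z‖ = t⁻¹ * ‖w - z‖ := by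
      rw [← smul_sub, norm_smul, Real.norm_eq_abs, abs_of_pos (inv_pos.mpr ht0)]
    rw [hnorm] at h
    have h2 : F (t⁻¹ • w) - F (t⁻¹ • z) ≤ c₃ * (t⁻¹ * ‖w - z‖) := (abs_le.mp h).2
    have := mul_le_mul_of_nonneg_left h2 ht0.le
    calc t * F (t⁻¹ • w) - t * F (t⁻¹ • z) = t * (F (t⁻¹ • w) - F (t⁻¹ • z)) := by ring
      _ ≤ t * (c₃ * (t⁻¹ * ‖w - z‖)) := this
      _ = c₃ * ‖w - z‖ := by field_simp; try ring
  have hFinf0 : Finf 0 = 0 := by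
    have h1 := hFinf (0 : W)
    have h2 : Tendsto (fun t : ℝ => t * F (t⁻¹ • (0:W))) (𝓝[>] (0:ℝ)) (𝓝 0) := by
      have : Tendsto (fun t : ℝ => t * F 0) (𝓝 (0:ℝ)) (𝓝 (0 * F 0)) :=
        (continuous_id.mul continuous_const).tendsto 0
      simpa [smul_zero] using this.mono_left nhdsWithin_le_nhds
    exact tendsto_nhds_unique h1 h2
  have hFinf_homog : ∀ lam : ℝ, 0 < lam → ∀ z : W, Finf (lam • z) = lam * Finf z := by
    intro lam hlam z
    have hmap : Tendsto (fun t : ℝ => t / lam) (𝓝[>] (0:ℝ)) (𝓝[>] (0:ℝ)) := by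
      apply tendsto_nhdsWithin_of_tendsto_nhds_of_eventually_within
      · have : Tendsto (fun t : ℝ => t / lam) (𝓝 (0:ℝ)) (𝓝 (0 / lam)) :=
          (continuous_id.div_const lam).tendsto 0
        simpa using this.mono_left nhdsWithin_le_nhds
      · filter_upwards [eventually_mem_nhdsWithin] with t ht
        exact div_pos ht hlam
    have h2 : Tendsto (fun t : ℝ => lam * ((t / lam) * F ((t / lam)⁻¹ • z)))
        (𝓝[>] (0:ℝ)) (𝓝 (lam * Finf z)) := ((hFinf z).comp hmap).const_mul lam
    have heq : (fun t : ℝ => lam * ((t / lam) * F ((t / lam)⁻¹ • z)))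
        = fun t : ℝ => t * F (t⁻¹ • (lam • z)) := by
      funext t
      have h1 : lam * (t / lam) = t := by field_simp
      have h2 : (t / lam)⁻¹ • z = t⁻¹ • lam • z := by
        rw [smul_smul]; congr 1; field_simp
      rw [← mul_assoc, h1, h2]
    rw [heq] at h2
    exact tendsto_nhds_unique (hFinf (lam • z)) h2
  -- homogeneity of Fp
  have hhom : ∀ lam : ℝ, 0 ≤ lam → ∀ t : ℝ, 0 ≤ t → ∀ z : W,
      Fp (lam * t, lam • z) = lam * Fp (t, z) := by
    intro lam hlam t ht z
    rcases eq_or_lt_of_le hlam with h0 | hlam'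
    · simp [← h0, hFp, hFinf0]
    rcases eq_or_lt_of_le ht with ht0 | ht'
    · rw [hFp, hFp]
      simp only [← ht0, mul_zero]
      rw [if_neg (lt_irrefl 0), if_neg (lt_irrefl 0)]
      exact hFinf_homog lam hlam' z
    · rw [hFp, hFp]
      have hlt : 0 < lam * t := mul_pos hlam' ht'
      rw [if_pos hlt, if_pos ht']
      have : ((lam * t)⁻¹ : ℝ) • (lam • z) = t⁻¹ • z := by
        rw [smul_smul]; congr 1; field_simp
      simp only [this]
      ring
  -- limit characterization of Fp
  have hGlim : ∀ (t : ℝ), 0 ≤ t → ∀ z : W,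
      Tendsto (fun e : ℝ => (t + e) * F ((t + e)⁻¹ • z)) (𝓝[>] (0:ℝ)) (𝓝 (Fp (t, z))) := by
    intro t ht z
    rcases eq_or_lt_of_le ht with ht0 | ht'
    · have : Fp (t, z) = Finf z := by rw [hFp]; simp [← ht0]
      rw [this]
      simpa [← ht0] using hFinf z
    · have hcont : ContinuousAt (fun e : ℝ => (t + e) * F ((t + e)⁻¹ • z)) 0 := by
        have h1 : ContinuousAt (fun e : ℝ => t + e) 0 := by fun_prop
        have hne : t + 0 ≠ 0 := by simpa using ht'.ne'
        have h2 : ContinuousAt (fun e : ℝ => (t + e)⁻¹ • z) 0 :=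
          (h1.inv₀ hne).smul continuousAt_const
        exact h1.mul (hFcont.continuousAt.comp h2)
      have h0 : Tendsto (fun e : ℝ => (t + e) * F ((t + e)⁻¹ • z)) (𝓝 (0:ℝ))
          (𝓝 ((t + 0) * F ((t + 0)⁻¹ • z))) := hcont.tendsto
      rw [add_zero] at h0
      have h1 := h0.mono_left (nhdsWithin_le_nhds (s := Set.Ioi (0:ℝ)))
      have hval : Fp (t, z) = t * F (t⁻¹ • z) := by rw [hFp]; exact if_pos ht'
      rwa [hval]
  -- subadditivity
  have hsub : ∀ (t : ℝ), 0 ≤ t → ∀ (s : ℝ), 0 ≤ s → ∀ z w : W,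
      Fp (t + s, z + w) ≤ Fp (t, z) + Fp (s, w) := by
    intro t ht s hs z w
    have hpos : ∀ a b : ℝ, 0 < a → 0 < b → ∀ zz ww : W,
        (a + b) * F ((a + b)⁻¹ • (zz + ww)) ≤ a * F (a⁻¹ • zz) + b * F (b⁻¹ • ww) := by
      intro a b ha hb zz ww
      have hab : 0 < a + b := by linarith
      have hx : (a / (a + b)) • (a⁻¹ • zz) + (b / (a + b)) • (b⁻¹ • ww)
          = (a + b)⁻¹ • (zz + ww) := by
        have e1 : a / (a + b) * a⁻¹ = (a + b)⁻¹ := by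
          field_simp
        have e2 : b / (a + b) * b⁻¹ = (a + b)⁻¹ := by
          field_simp
        rw [smul_smul, smul_smul, e1, e2, smul_add]
      have := hconv.2 (Set.mem_univ (a⁻¹ • zz)) (Set.mem_univ (b⁻¹ • ww))
        (by positivity : (0:ℝ) ≤ a / (a + b)) (by positivity : (0:ℝ) ≤ b / (a + b))
        (by rw [← add_div, div_self hab.ne'])
      rw [hx] at this
      have h2 := mul_le_mul_of_nonneg_left this hab.le
      calc (a + b) * F ((a + b)⁻¹ • (zz + ww))
          ≤ (a + b) * (a / (a + b) * F (a⁻¹ • zz) + b / (a + b) * F (b⁻¹ • ww)) := h2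
        _ = a * F (a⁻¹ • zz) + b * F (b⁻¹ • ww) := by
            have f1 : (a + b) * (a / (a + b)) = a := by field_simp
            have f2 : (a + b) * (b / (a + b)) = b := by field_simp
            rw [mul_add, ← mul_assoc, ← mul_assoc, f1, f2]
    have hmap2 : Tendsto (fun e : ℝ => 2 * e) (𝓝[>] (0:ℝ)) (𝓝[>] (0:ℝ)) := by
      apply tendsto_nhdsWithin_of_tendsto_nhds_of_eventually_within
      · have : Tendsto (fun e : ℝ => 2 * e) (𝓝 (0:ℝ)) (𝓝 (2 * 0)) :=
          (continuous_const.mul continuous_id).tendsto 0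
        simpa using this.mono_left nhdsWithin_le_nhds
      · filter_upwards [eventually_mem_nhdsWithin] with e he
        have : (0:ℝ) < e := he
        simpa using by positivity
    have hf : Tendsto (fun e : ℝ => (t + s + 2 * e) * F ((t + s + 2 * e)⁻¹ • (z + w)))
        (𝓝[>] (0:ℝ)) (𝓝 (Fp (t + s, z + w))) := by
      have := (hGlim (t + s) (by linarith) (z + w)).comp hmap2
      simpa [Function.comp_def, add_assoc] using this
    have hg : Tendsto (fun e : ℝ => (t + e) * F ((t + e)⁻¹ • z) + (s + e) * F ((s + e)⁻¹ • w))
        (𝓝[>] (0:ℝ)) (𝓝 (Fp (t, z) + Fp (s, w))) := (hGlim t ht z).add (hGlim s hs w)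
    refine le_of_tendsto_of_tendsto hf hg ?_
    filter_upwards [eventually_mem_nhdsWithin] with e he
    have he0 : (0:ℝ) < e := he
    have := hpos (t + e) (s + e) (by linarith) (by linarith) z w
    have harith : t + e + (s + e) = t + s + 2 * e := by ring
    rw [harith] at this
    exact this
  -- convexity
  have hconvFp : ConvexOn ℝ (Set.Ici (0 : ℝ) ×ˢ (Set.univ : Set W)) Fp := by
    refine ⟨(convex_Ici 0).prod convex_univ, ?_⟩
    rintro ⟨pt, pz⟩ hp ⟨qt, qz⟩ hq a b ha hb hab
    have hpt : 0 ≤ pt := hp.1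
    have hqt : 0 ≤ qt := hq.1
    have hsmul : a • ((pt, pz) : ℝ × W) + b • ((qt, qz) : ℝ × W)
        = (a * pt + b * qt, a • pz + b • qz) := rfl
    rw [hsmul]
    calc Fp (a * pt + b * qt, a • pz + b • qz)
        ≤ Fp (a * pt, a • pz) + Fp (b * qt, b • qz) :=
          hsub (a * pt) (mul_nonneg ha hpt) (b * qt) (mul_nonneg hb hqt) _ _
      _ = a * Fp (pt, pz) + b * Fp (qt, qz) := by
          rw [hhom a ha pt hpt pz, hhom b hb qt hqt qz]
  -- growth
  have hgrowth : ∃ C : ℝ, 0 < C ∧ ∀ t : ℝ, 0 ≤ t → ∀ z : W, |Fp (t, z)| ≤ C * (t + ‖z‖) := by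
    refine ⟨c₃ + |c₂|, by positivity, ?_⟩
    intro t ht z
    rcases eq_or_lt_of_le ht with ht0 | ht'
    · have : Fp (t, z) = Finf z := by rw [hFp]; simp [← ht0]
      rw [this, ← ht0]
      have h1 : 0 ≤ Finf z := le_trans (by positivity) (hFinf_lb z)
      rw [abs_of_nonneg h1]
      have := hFinf_ub z
      nlinarith [norm_nonneg z, abs_nonneg c₂]
    · have hFpv : Fp (t, z) = t * F (t⁻¹ • z) := by rw [hFp]; simp [ht']
      have hnorm : ‖t⁻¹ • z‖ = t⁻¹ * ‖z‖ := by
        rw [norm_smul, Real.norm_eq_abs, abs_of_pos (inv_pos.mpr ht')]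
      rw [hFpv, abs_le]
      constructor
      · have := mul_le_mul_of_nonneg_left (hlow (t⁻¹ • z)) ht'.le
        rw [hnorm] at this
        have ht1 : t * (c₁ * (t⁻¹ * ‖z‖) - c₂) = c₁ * ‖z‖ - c₂ * t := by field_simp; try ring
        rw [ht1] at this
        have e1 : c₂ * t ≤ |c₂| * t := mul_le_mul_of_nonneg_right (le_abs_self c₂) ht'.le
        nlinarith [e1, norm_nonneg z, mul_nonneg hc₃.le (norm_nonneg z),
          mul_nonneg hc₃.le ht'.le, mul_nonneg (abs_nonneg c₂) (norm_nonneg z),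
          mul_nonneg hc₁.le (norm_nonneg z)]
      · have := mul_le_mul_of_nonneg_left (hup (t⁻¹ • z)) ht'.le
        rw [hnorm] at this
        have ht1 : t * (c₃ * (1 + t⁻¹ * ‖z‖)) = c₃ * t + c₃ * ‖z‖ := by field_simp; try ring
        rw [ht1] at this
        nlinarith [norm_nonneg z, abs_nonneg c₂]
  -- continuity
  have hcontFp : ContinuousOn Fp (Set.Ici (0 : ℝ) ×ˢ (Set.univ : Set W)) := by
    rintro ⟨t, z₀⟩ hp
    have ht : 0 ≤ t := hp.1
    rcases eq_or_lt_of_le ht with ht0 | ht'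
    · -- boundary point t = 0
      rw [Metric.continuousWithinAt_iff]
      intro ε hε
      -- choose t₀
      have hev : ∀ᶠ s in 𝓝[>] (0:ℝ),
          s * (F (s⁻¹ • z₀) - F 0) > Finf z₀ - ε / 4 ∧ s ∈ Set.Ioi (0:ℝ) := by
        refine ((hlimh z₀).eventually (eventually_gt_nhds (by linarith))).and
          eventually_mem_nhdsWithin
      obtain ⟨t₀, hht₀, ht₀pos⟩ := hev.exists
      have ht₀ : (0:ℝ) < t₀ := ht₀pos
      set δ := min t₀ (ε / (4 * (c₃ + |F 0| + 1))) with hδ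
      have hδpos : 0 < δ := lt_min ht₀ (by positivity)
      refine ⟨δ, hδpos, ?_⟩
      rintro ⟨s, z⟩ hmem hdist
      have hs : 0 ≤ s := hmem.1
      rw [Prod.dist_eq, max_lt_iff] at hdist
      have hds : |s - t| < δ := by simpa [Real.dist_eq] using hdist.1
      have hs' : s < δ := by
        rw [← ht0] at hds
        rw [abs_lt] at hds
        linarith [hds.2]
      have hdz : ‖z - z₀‖ < δ := by simpa [dist_eq_norm] using hdist.2
      have hFpval : Fp (t, z₀) = Finf z₀ := by rw [hFp]; simp [← ht0]
      -- upper bound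
      have hupper : Fp (s, z) ≤ Finf z₀ + c₃ * ‖z - z₀‖ + s * |F 0| := by
        have hzz : Finf z ≤ Finf z₀ + c₃ * ‖z - z₀‖ := by
          have := hFinf_lip z₀ z
          linarith
        rcases eq_or_lt_of_le hs with hs0 | hs0
        · have : Fp (s, z) = Finf z := by rw [hFp]; simp [← hs0]
          rw [this, ← hs0]
          simpa using hzz
        · have hv : Fp (s, z) = s * F (s⁻¹ • z) := by rw [hFp]; simp [hs0]
          have h1 : s * (F (s⁻¹ • z) - F 0) ≤ Finf z := hub z s hs0
          have h2 : s * F 0 ≤ s * |F 0| := mul_le_mul_of_nonneg_left (le_abs_self _) hs0.le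
          rw [hv]
          nlinarith [h1, h2, hzz]
      -- lower bound
      have hlower : Finf z₀ - ε / 4 - c₃ * ‖z - z₀‖ - s * |F 0| ≤ Fp (s, z) := by
        have hzlip : t₀ * (F (t₀⁻¹ • z₀) - F 0) - c₃ * ‖z - z₀‖
            ≤ t₀ * (F (t₀⁻¹ • z) - F 0) := by
          have h := hLipabs (t₀⁻¹ • z) (t₀⁻¹ • z₀)
          have hnorm : ‖t₀⁻¹ • z₀ - t₀⁻¹ • z‖ = t₀⁻¹ * ‖z₀ - z‖ := by
            rw [← smul_sub, norm_smul, Real.norm_eq_abs, abs_of_pos (inv_pos.mpr ht₀)]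
          rw [hnorm] at h
          have h2 : F (t₀⁻¹ • z₀) - F (t₀⁻¹ • z) ≤ c₃ * (t₀⁻¹ * ‖z₀ - z‖) := (abs_le.mp h).2
          have h3 := mul_le_mul_of_nonneg_left h2 ht₀.le
          have h4 : t₀ * (c₃ * (t₀⁻¹ * ‖z₀ - z‖)) = c₃ * ‖z₀ - z‖ := by field_simp; try ring
          rw [h4] at h3
          rw [norm_sub_rev z z₀]
          nlinarith [h3]
        rcases eq_or_lt_of_le hs with hs0 | hs0
        · have hv : Fp (s, z) = Finf z := by rw [hFp]; simp [← hs0]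
          have := hFinf_lip z z₀
          rw [hv, ← hs0]
          have hz0 : Finf z₀ - c₃ * ‖z - z₀‖ ≤ Finf z := by
            rw [norm_sub_rev z₀ z] at this
            linarith
          simp only [zero_mul, sub_zero]
          linarith [hz0, hε]
        · have hv : Fp (s, z) = s * F (s⁻¹ • z) := by rw [hFp]; simp [hs0]
          have hst₀ : s ≤ t₀ := le_trans hs'.le (min_le_left _ _)
          have hmono : t₀ * (F (t₀⁻¹ • z) - F 0) ≤ s * (F (s⁻¹ • z) - F 0) :=
            hanti z s t₀ hs0 hst₀
          have hf0 : -(s * |F 0|) ≤ s * F 0 := by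
            have := mul_le_mul_of_nonneg_left (neg_abs_le (F 0)) hs0.le
            nlinarith [this]
          rw [hv]
          nlinarith [hht₀, hzlip, hmono, hf0]
      -- combine
      rw [hFpval, Real.dist_eq]
      have hbound1 : c₃ * ‖z - z₀‖ + s * |F 0| < ε / 2 := by
        have h1 : c₃ * ‖z - z₀‖ ≤ c₃ * δ := mul_le_mul_of_nonneg_left hdz.le hc₃.le
        have h2 : s * |F 0| ≤ δ * |F 0| := mul_le_mul_of_nonneg_right hs'.le (abs_nonneg _)
        have hδle : δ ≤ ε / (4 * (c₃ + |F 0| + 1)) := min_le_right _ _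
        have hc : 0 < c₃ + |F 0| + 1 := by positivity
        have h3 : δ * (c₃ + |F 0|) ≤ ε / (4 * (c₃ + |F 0| + 1)) * (c₃ + |F 0|) :=
          mul_le_mul_of_nonneg_right hδle (by positivity)
        have h4 : ε / (4 * (c₃ + |F 0| + 1)) * (c₃ + |F 0|) < ε / 2 := by
          rw [div_mul_eq_mul_div, div_lt_iff₀ (by positivity)]
          nlinarith [abs_nonneg (F 0)]
        nlinarith [h1, h2, h3, h4]
      rw [abs_lt]
      constructor <;> nlinarith [hupper, hlower, hbound1, hε]
    · -- interior point t > 0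
      apply ContinuousAt.continuousWithinAt
      have hopen : IsOpen {q : ℝ × W | 0 < q.1} := isOpen_lt continuous_const continuous_fst
      have hGcont : ContinuousAt (fun q : ℝ × W => q.1 * F (q.1⁻¹ • q.2)) (t, z₀) := by
        have h1 : ContinuousAt (fun q : ℝ × W => q.1) (t, z₀) := continuousAt_fst
        have h2 : ContinuousAt (fun q : ℝ × W => q.1⁻¹ • q.2) (t, z₀) :=
          (h1.inv₀ ht'.ne').smul continuousAt_snd
        exact h1.mul (hFcont.continuousAt.comp h2)
      refine hGcont.congr ?_
      filter_upwards [hopen.mem_nhds (by exact ht' : (0:ℝ) < ((t, z₀) : ℝ × W).1)] with q hq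
      rw [hFp, if_pos hq]
  exact ⟨hcontFp, hhom, hconvFp, hgrowth⟩
end
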